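/- Let X and Y be spectral spaces (compact, T0, sober topological spaces whose compact open subsets are closed under finite intersections and form a basis of the topology), and let f : X → Y be a spectral map. Suppose the preimage map on compact opens, sending a compact open V ⊆ Y to f ⁻¹' V, has a left adjoint ℓ (a monotone map from compact opens of X to compact opens of Y with ℓ U ⊆ V ↔ U ⊆ f ⁻¹' V) satisfying the Frobenius condition ℓ (U ∩ f ⁻¹' V) = ℓ U ∩ V for all compact open U ⊆ X and compact open V ⊆ Y. Then f is an open map. -/

import Mathlib

/-- Let `X`, `Y` be spectral spaces (compact, T0, sober, with compact opens
closed under finite intersections and forming a basis) and `f : X → Y` a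
spectral map. If the preimage map between the lattices of compact open sets
has a monotone left adjoint `ℓ` satisfying the Frobenius condition, then `f`
is an open map. -/
theorem stmt_11 {X Y : Type*} [TopologicalSpace X] [TopologicalSpace Y]
    [CompactSpace X] [T0Space X] [QuasiSober X]
    [CompactSpace Y] [T0Space Y] [QuasiSober Y]
    (hXinter : ∀ U V : Set X, IsCompact U → IsOpen U → IsCompact V → IsOpen V →
      IsCompact (U ∩ V))
    (hXbasis : TopologicalSpace.IsTopologicalBasis
      {U : Set X | IsCompact U ∧ IsOpen U})
    (hYinter : ∀ U V : Set Y, IsCompact U → IsOpen U → IsCompact V → IsOpen V →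
      IsCompact (U ∩ V))
    (hYbasis : TopologicalSpace.IsTopologicalBasis
      {U : Set Y | IsCompact U ∧ IsOpen U})
    (f : X → Y) (hf : Continuous f)
    (hspec : ∀ V : Set Y, IsCompact V → IsOpen V → IsCompact (f ⁻¹' V))
    (ℓ : {U : Set X // IsCompact U ∧ IsOpen U} → {V : Set Y // IsCompact V ∧ IsOpen V})
    (hℓmono : Monotone ℓ)
    (adj : ∀ (U : {U : Set X // IsCompact U ∧ IsOpen U})
      (V : {V : Set Y // IsCompact V ∧ IsOpen V}),
      (ℓ U : Set Y) ⊆ (V : Set Y) ↔ (U : Set X) ⊆ f ⁻¹' (V : Set Y))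
    (frob : ∀ (U W : {U : Set X // IsCompact U ∧ IsOpen U})
      (V : {V : Set Y // IsCompact V ∧ IsOpen V}),
      (W : Set X) = (U : Set X) ∩ f ⁻¹' (V : Set Y) →
      (ℓ W : Set Y) = (ℓ U : Set Y) ∩ (V : Set Y)) :
    IsOpenMap f := by
  suffices key : ∀ U : Set X, IsCompact U → IsOpen U → IsOpen (f '' U) by
    intro O hO
    obtain ⟨S, hSB, rfl⟩ := hXbasis.open_eq_sUnion hO
    rw [Set.image_sUnion]
    exact isOpen_sUnion fun s ⟨u, hu, hus⟩ => hus ▸ key u (hSB hu).1 (hSB hu).2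
  intro U hUc hUo
  have hU : IsCompact U ∧ IsOpen U := ⟨hUc, hUo⟩
  suffices h : f '' U = (ℓ ⟨U, hU⟩ : Set Y) by
    rw [h]; exact (ℓ ⟨U, hU⟩).2.2
  apply Set.Subset.antisymm
  · rw [Set.image_subset_iff]
    exact (adj ⟨U, hU⟩ (ℓ ⟨U, hU⟩)).mp subset_rfl
  intro y hy
  -- Step 1: for every compact open `V ∋ y`,
  -- `U ∩ f ⁻¹' V ∩ f ⁻¹' closure {y}` is nonempty.
  have claim : ∀ V : Set Y, IsCompact V → IsOpen V → y ∈ V →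
      (U ∩ f ⁻¹' V ∩ f ⁻¹' closure ({y} : Set Y)).Nonempty := by
    intro V hVc hVo hyV
    by_contra hemp
    rw [Set.not_nonempty_iff_eq_empty] at hemp
    have hWco : IsCompact (U ∩ f ⁻¹' V) ∧ IsOpen (U ∩ f ⁻¹' V) :=
      ⟨hXinter _ _ hUc hUo (hspec V hVc hVo) (hVo.preimage hf), hUo.inter (hVo.preimage hf)⟩
    have hsub : f '' (U ∩ f ⁻¹' V) ⊆ (closure ({y} : Set Y))ᶜ := by
      rintro _ ⟨x, hx, rfl⟩ hmem
      exact Set.eq_empty_iff_forall_notMem.mp hemp x ⟨hx, hmem⟩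
    have hAc : IsCompact (f '' (U ∩ f ⁻¹' V)) := hWco.1.image hf
    -- cover the image by compact opens avoiding `closure {y}`
    have hcover : f '' (U ∩ f ⁻¹' V) ⊆
        ⋃ i : {W : Set Y // (IsCompact W ∧ IsOpen W) ∧ W ⊆ (closure ({y} : Set Y))ᶜ}, i.1 := by
      intro z hz
      obtain ⟨W, hWB, hzW, hWsub⟩ :=
        hYbasis.exists_subset_of_mem_open (hsub hz) isClosed_closure.isOpen_compl
      exact Set.mem_iUnion.mpr ⟨⟨W, hWB, hWsub⟩, hzW⟩
    obtain ⟨t, ht⟩ := hAc.elim_finite_subcover _ (fun i => i.2.1.2) hcover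
    set V' : Set Y := ⋃ i ∈ t, (i :
      {W : Set Y // (IsCompact W ∧ IsOpen W) ∧ W ⊆ (closure ({y} : Set Y))ᶜ}).1 with hV'def
    have hV'c : IsCompact V' := t.isCompact_biUnion fun i _ => i.2.1.1
    have hV'o : IsOpen V' := isOpen_biUnion fun i _ => i.2.1.2
    have hyV' : y ∉ V' := by
      rw [hV'def]
      simp only [Set.mem_iUnion]
      rintro ⟨i, _, hyi⟩
      exact i.2.2 hyi (subset_closure rfl)
    have hfr := frob ⟨U, hU⟩ ⟨_, hWco⟩ ⟨V, hVc, hVo⟩ rfl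
    have h1 : (ℓ ⟨_, hWco⟩ : Set Y) ⊆ V' := by
      refine (adj _ ⟨V', hV'c, hV'o⟩).mpr ?_
      rw [← Set.image_subset_iff]
      exact ht
    have hyl : y ∈ (ℓ ⟨_, hWco⟩ : Set Y) := by rw [hfr]; exact ⟨hy, hyV⟩
    exact hyV' (h1 hyl)
  -- Step 2: Zorn's lemma to find a minimal closed set meeting all these sets.
  set S : Set (Set X) := {C | IsClosed C ∧ ∀ V : Set Y, IsCompact V → IsOpen V → y ∈ V →
    (U ∩ f ⁻¹' V ∩ f ⁻¹' closure ({y} : Set Y) ∩ C).Nonempty} with hSdef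
  have hunivS : Set.univ ∈ S := by
    refine ⟨isClosed_univ, fun V hVc hVo hyV => ?_⟩
    simpa using claim V hVc hVo hyV
  have hzorn : ∀ c ⊆ S, IsChain (· ⊆ ·) c → c.Nonempty →
      ∃ lb ∈ S, ∀ s ∈ c, lb ⊆ s := by
    intro c hcS hchain hcne
    refine ⟨⋂₀ c, ⟨isClosed_sInter fun C hC => (hcS hC).1, ?_⟩, fun s hs => Set.sInter_subset_of_mem hs⟩
    intro V hVc hVo hyV
    have hKc : IsCompact (U ∩ f ⁻¹' V ∩ f ⁻¹' closure ({y} : Set Y)) :=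
      (hXinter _ _ hUc hUo (hspec V hVc hVo) (hVo.preimage hf)).inter_right
        (isClosed_closure.preimage hf)
    rw [Set.sInter_eq_iInter]
    refine hKc.inter_iInter_nonempty _ (fun i => (hcS i.2).1) ?_
    intro u
    rcases u.eq_empty_or_nonempty with rfl | hune
    · simpa using claim V hVc hVo hyV
    · obtain ⟨i₀, hi₀u, hi₀min⟩ : ∃ i ∈ u, ∀ x ∈ u, ¬ x < i := by
        obtain ⟨i, hi⟩ := Finset.exists_minimal hune
        exact ⟨i, hi.1, fun x hx => hi.not_lt hx⟩
      have hsub : ∀ j ∈ u, (i₀ : Set X) ⊆ (j : Set X) := by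
        intro j hju
        rcases hchain.total i₀.2 j.2 with h | h
        · exact h
        · rcases eq_or_ne (j : Set X) (i₀ : Set X) with he | hne
          · exact he.ge
          · exact absurd (Subtype.coe_lt_coe.mp (lt_of_le_of_ne h hne)) (hi₀min j hju)
      obtain ⟨x, hx1, hx2⟩ := (hcS i₀.2).2 V hVc hVo hyV
      exact ⟨x, hx1, Set.mem_iInter₂.mpr fun j hj => hsub j hj hx2⟩
  obtain ⟨C₀, -, hC₀min⟩ := zorn_superset_nonempty S hzorn Set.univ hunivS
  have hC₀S : C₀ ∈ S := hC₀min.1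
  -- C₀ is nonempty
  have hne : C₀.Nonempty := by
    obtain ⟨x, -, hx⟩ := hC₀S.2 Set.univ isCompact_univ isOpen_univ (Set.mem_univ y)
    exact ⟨x, hx⟩
  -- C₀ is irreducible
  have hirr : IsIrreducible C₀ := by
    refine ⟨hne, fun u v hu hv ⟨a, haC, hau⟩ ⟨b, hbC, hbv⟩ => ?_⟩
    by_contra hempty
    rw [Set.not_nonempty_iff_eq_empty] at hempty
    have hnotS : ∀ w : Set X, IsOpen w → (C₀ ∩ w).Nonempty → ∃ V : Set Y,
        IsCompact V ∧ IsOpen V ∧ y ∈ V ∧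
        (U ∩ f ⁻¹' V ∩ f ⁻¹' closure ({y} : Set Y) ∩ (C₀ ∩ wᶜ)) = ∅ := by
      intro w hw ⟨p, hpC, hpw⟩
      by_contra hcon
      push_neg at hcon
      have hmem : C₀ ∩ wᶜ ∈ S := by
        refine ⟨hC₀S.1.inter hw.isClosed_compl, fun V hVc hVo hyV => ?_⟩
        exact hcon V hVc hVo hyV
      have := hC₀min.2 hmem Set.inter_subset_left
      exact (this hpC).2 hpw
    obtain ⟨V₁, hV₁c, hV₁o, hyV₁, h₁⟩ := hnotS u hu ⟨a, haC, hau⟩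
    obtain ⟨V₂, hV₂c, hV₂o, hyV₂, h₂⟩ := hnotS v hv ⟨b, hbC, hbv⟩
    obtain ⟨x, hx1, hx2⟩ := hC₀S.2 (V₁ ∩ V₂) (hYinter _ _ hV₁c hV₁o hV₂c hV₂o)
      (hV₁o.inter hV₂o) ⟨hyV₁, hyV₂⟩
    have hxu : x ∈ u := by
      by_contra hxu
      exact Set.eq_empty_iff_forall_notMem.mp h₁ x
        ⟨⟨⟨hx1.1.1, hx1.1.2.1⟩, hx1.2⟩, hx2, hxu⟩
    have hxv : x ∈ v := by
      by_contra hxv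
      exact Set.eq_empty_iff_forall_notMem.mp h₂ x
        ⟨⟨⟨hx1.1.1, hx1.1.2.2⟩, hx1.2⟩, hx2, hxv⟩
    exact Set.eq_empty_iff_forall_notMem.mp hempty x ⟨hx2, hxu, hxv⟩
  -- generic point
  obtain ⟨x, hx⟩ := QuasiSober.sober hirr hC₀S.1
  have hxC₀ : x ∈ C₀ := hx ▸ subset_closure rfl
  -- x lies in U ∩ f⁻¹ V for every compact open V ∋ y
  have hxmem : ∀ V : Set Y, IsCompact V → IsOpen V → y ∈ V → x ∈ U ∩ f ⁻¹' V := by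
    intro V hVc hVo hyV
    obtain ⟨z, hz1, hz2⟩ := hC₀S.2 V hVc hVo hyV
    have hzcl : z ∈ closure ({x} : Set X) := hx ▸ hz2
    have := mem_closure_iff.mp hzcl (U ∩ f ⁻¹' V) (hUo.inter (hVo.preimage hf)) hz1.1
    obtain ⟨w, hw1, hw2⟩ := this
    rwa [Set.mem_singleton_iff.mp hw2] at hw1
  have hxU : x ∈ U := (hxmem Set.univ isCompact_univ isOpen_univ (Set.mem_univ y)).1
  -- f x ∈ closure {y}
  have hfx_cl : f x ∈ closure ({y} : Set Y) := by
    have hmem : C₀ ∩ f ⁻¹' closure ({y} : Set Y) ∈ S := by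
      refine ⟨hC₀S.1.inter (isClosed_closure.preimage hf), fun V hVc hVo hyV => ?_⟩
      obtain ⟨z, hz1, hz2⟩ := hC₀S.2 V hVc hVo hyV
      exact ⟨z, hz1, hz2, hz1.2⟩
    have := hC₀min.2 hmem Set.inter_subset_left
    exact (this hxC₀).2
  -- y ∈ closure {f x}
  have hy_cl : y ∈ closure ({f x} : Set Y) := by
    rw [mem_closure_iff]
    intro o ho hyo
    obtain ⟨W, hWB, hyW, hWo⟩ := hYbasis.exists_subset_of_mem_open hyo ho
    exact ⟨f x, hWo (hxmem W hWB.1 hWB.2 hyW).2, rfl⟩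
  have hfxy : f x = y := by
    have h1 : f x ⤳ y := specializes_iff_mem_closure.mpr hy_cl
    have h2 : y ⤳ f x := specializes_iff_mem_closure.mpr hfx_cl
    exact (h1.antisymm h2).eq
  exact ⟨x, hxU, hfxy⟩
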